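/- If A₁ and A₂ are bounded operators on a Hilbert space with A₁ positive semidefinite, then the operator norm of the commutator satisfies ‖A₁A₂ - A₂A₁‖ ≤ ‖A₁‖·‖A₂‖. -/

import Mathlib

/-- If `A₁` and `A₂` are bounded operators on a complex Hilbert space with `A₁`
positive semidefinite, then `‖A₁A₂ - A₂A₁‖ ≤ ‖A₁‖·‖A₂‖`. -/
theorem commutator_norm_le_of_isPositive
    {E : Type*} [NormedAddCommGroup E] [InnerProductSpace ℂ E] [CompleteSpace E]
    (A₁ A₂ : E →L[ℂ] E) (hA₁ : A₁.IsPositive) :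
    ‖A₁ * A₂ - A₂ * A₁‖ ≤ ‖A₁‖ * ‖A₂‖ := by
  obtain hE | hE := subsingleton_or_nontrivial E
  · have : A₁ * A₂ - A₂ * A₁ = 0 := Subsingleton.elim _ _
    rw [this, norm_zero]
    positivity
  set r := ‖A₁‖ with hr
  have hA₁sa : IsSelfAdjoint A₁ := hA₁.isSelfAdjoint
  have h0 : (0 : E →L[ℂ] E) ≤ A₁ := (ContinuousLinearMap.nonneg_iff_isPositive A₁).mpr hA₁
  set B : E →L[ℂ] E := A₁ - algebraMap ℝ (E →L[ℂ] E) (r / 2) with hBdef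
  have hBsa : IsSelfAdjoint B := by
    refine hA₁sa.sub ?_
    exact IsSelfAdjoint.algebraMap _ (by simp [IsSelfAdjoint])
  have hnormB : ‖B‖ ≤ r / 2 := by
    have hrhalf : (0:ℝ) ≤ r / 2 := by positivity
    rw [← hBsa.toReal_spectralRadius_eq_norm]
    have hle : spectralRadius ℝ B ≤ ENNReal.ofReal (r / 2) := by
      rw [spectralRadius]
      refine iSup₂_le fun k hk => ?_
      have hk' : k + r / 2 ∈ spectrum ℝ A₁ := by
        rw [← spectrum.sub_singleton_eq] at hk
        obtain ⟨x, hx, y, hy, hxy⟩ := hk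
        simp only [Set.mem_singleton_iff] at hy
        subst hy
        have : x = k + r / 2 := by linarith
        rwa [← this]
      have h1 : 0 ≤ k + r / 2 :=
        (StarOrderedRing.nonneg_iff_spectrum_nonneg (R := ℝ) A₁).mp h0 _ hk'
      have h2 : k + r / 2 ≤ r :=
        le_trans (Real.le_norm_self _) (spectrum.norm_le_norm_of_mem hk')
      have hk2 : ‖k‖ ≤ r / 2 := by
        rw [Real.norm_eq_abs]
        exact abs_le.mpr ⟨by linarith, by linarith⟩
      rw [← ENNReal.ofReal_coe_nnreal, coe_nnnorm]
      exact ENNReal.ofReal_le_ofReal hk2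
    calc (spectralRadius ℝ B).toReal ≤ (ENNReal.ofReal (r / 2)).toReal :=
          ENNReal.toReal_mono ENNReal.ofReal_ne_top hle
      _ = r / 2 := ENNReal.toReal_ofReal hrhalf
  have hcomm : A₁ * A₂ - A₂ * A₁ = B * A₂ - A₂ * B := by
    rw [hBdef, sub_mul, mul_sub, Algebra.commutes]
    abel
  rw [hcomm]
  have hA₂ : (0:ℝ) ≤ ‖A₂‖ := norm_nonneg _
  calc ‖B * A₂ - A₂ * B‖ ≤ ‖B * A₂‖ + ‖A₂ * B‖ := norm_sub_le _ _
    _ ≤ ‖B‖ * ‖A₂‖ + ‖A₂‖ * ‖B‖ := add_le_add (norm_mul_le _ _) (norm_mul_le _ _)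
    _ ≤ r / 2 * ‖A₂‖ + ‖A₂‖ * (r / 2) := by
        refine add_le_add (mul_le_mul_of_nonneg_right hnormB hA₂)
          (mul_le_mul_of_nonneg_left hnormB hA₂)
    _ = r * ‖A₂‖ := by ring
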